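/- Let W be a ℂ^{N×N}-valued analytic function on a neighborhood of λ₀ ∈ ℂ, let P be the orthogonal projector onto Ker W(λ₀), and suppose Z = W'(λ₀)·P + W(λ₀)·(I − P) is invertible. Then, with k = dim Ker W(λ₀), the scalar analytic function λ ↦ det W(λ) has a zero of order exactly k at λ₀; more precisely, det W(λ) = (λ−λ₀)^k · h(λ) for an analytic function h near λ₀ with h(λ₀) = det Z ≠ 0. -/

import Mathlib

open Matrix

/-- det of `a • P + (1 - P)` for an Hermitian idempotent `P`. -/
lemma det_smul_proj_add_aux {N : ℕ} (P : Matrix (Fin N) (Fin N) ℂ)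
    (hPH : Pᴴ = P) (hP2 : P * P = P) (a : ℂ) :
    (a • P + (1 - P)).det = a ^ P.rank := by
  classical
  have hP : P.IsHermitian := hPH
  set U : Matrix (Fin N) (Fin N) ℂ := (hP.eigenvectorUnitary : Matrix (Fin N) (Fin N) ℂ) with hU
  set c : Fin N → ℂ := RCLike.ofReal ∘ hP.eigenvalues with hc
  have hUU : U * star U = 1 := Matrix.mem_unitaryGroup_iff.mp hP.eigenvectorUnitary.2
  have hUU' : star U * U = 1 := Matrix.mem_unitaryGroup_iff'.mp hP.eigenvectorUnitary.2
  have hdiag : star U * P * U = diagonal c := by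
    have := hP.conjStarAlgAut_star_eigenvectorUnitary; rwa [Unitary.conjStarAlgAut_star_apply] at this
  have hspec : P = U * diagonal c * star U := by
    have := hP.spectral_theorem; rwa [Unitary.conjStarAlgAut_apply] at this
  -- eigenvalues are 0 or 1
  have hDD : diagonal c * diagonal c = diagonal c := by
    have step : (star U * P * U) * (star U * P * U) = star U * P * U :=
      calc (star U * P * U) * (star U * P * U)
          = star U * P * ((U * star U) * (P * U)) := by noncomm_ring
        _ = star U * P * (P * U) := by rw [hUU, one_mul]
        _ = star U * (P * P) * U := by noncomm_ring
        _ = star U * P * U := by rw [hP2]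
    rw [← hdiag, step]
  have hc01 : ∀ i, c i = 0 ∨ c i = 1 := by
    intro i
    have := congrArg (fun M => M i i) hDD
    simp only [Matrix.diagonal_mul_diagonal, Matrix.diagonal_apply_eq, Pi.mul_apply] at this
    have h2 : c i * (c i - 1) = 0 := by ring_nf; linear_combination this
    rcases mul_eq_zero.mp h2 with h | h
    · exact Or.inl h
    · exact Or.inr (sub_eq_zero.mp h)
  -- conjugate the matrix
  have key : a • P + (1 - P) = U * (a • diagonal c + (1 - diagonal c)) * star U := by
    calc a • P + (1 - P)
        = a • (U * diagonal c * star U) + (U * 1 * star U - U * diagonal c * star U) := by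
          rw [← hspec, mul_one, hUU]
      _ = U * (a • diagonal c + (1 - diagonal c)) * star U := by
          rw [Matrix.mul_add, Matrix.add_mul, Matrix.mul_sub, Matrix.sub_mul,
            Matrix.mul_smul, Matrix.smul_mul]
  have hmid : a • diagonal c + (1 - diagonal c) = diagonal (fun i => a * c i + (1 - c i)) := by
    ext i j
    rcases eq_or_ne i j with rfl | hij
    · simp [Matrix.diagonal_apply_eq, Matrix.one_apply_eq]
    · simp [Matrix.diagonal_apply_ne _ hij, Matrix.one_apply_ne hij]
  have hdet : (a • P + (1 - P)).det = ∏ i, (a * c i + (1 - c i)) := by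
    rw [key, hmid, Matrix.det_mul, Matrix.det_mul, mul_comm, ← mul_assoc, ← Matrix.det_mul, hUU',
      Matrix.det_one, one_mul, Matrix.det_diagonal]
  have hprod : ∏ i, (a * c i + (1 - c i)) = a ^ (Finset.univ.filter fun i => hP.eigenvalues i ≠ 0).card := by
    rw [Finset.card_filter, ← Finset.prod_pow_eq_pow_sum]
    apply Finset.prod_congr rfl
    intro i _
    rcases hc01 i with h | h
    · have h0 : hP.eigenvalues i = 0 := by
        have := h; simp only [hc, Function.comp_apply, RCLike.ofReal_eq_zero] at this
        exact this
      simp [h, h0]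
    · have h1 : hP.eigenvalues i ≠ 0 := by
        intro h0
        rw [hc] at h
        simp only [Function.comp_apply, h0] at h
        norm_num at h
      simp [h, h1]
  rw [hdet, hprod, hP.rank_eq_card_non_zero_eigs, Fintype.card_subtype]

lemma rank_eq_finrank_ker_aux {N : ℕ} (W0 P : Matrix (Fin N) (Fin N) ℂ)
    (hP2 : P * P = P)
    (hPker : ∀ v : Fin N → ℂ, W0 *ᵥ v = 0 ↔ P *ᵥ v = v) :
    P.rank = Module.finrank ℂ (LinearMap.ker (Matrix.mulVecLin W0)) := by
  have hsub : LinearMap.range P.mulVecLin = LinearMap.ker (Matrix.mulVecLin W0) := by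
    ext v
    simp only [LinearMap.mem_range, LinearMap.mem_ker, Matrix.mulVecLin_apply]
    constructor
    · rintro ⟨u, rfl⟩
      rw [hPker, Matrix.mulVec_mulVec, hP2]
    · intro hv
      exact ⟨v, (hPker v).mp hv⟩
  rw [Matrix.rank, hsub]

/-- If `W` is analytic near `λ₀`, `P` is the orthogonal projector onto
`Ker W(λ₀)` and `Z = W'(λ₀)P + W(λ₀)(I-P)` is invertible, then `det W` has a zero of order
exactly `k = dim Ker W(λ₀)` at `λ₀`: `det W(λ) = (λ-λ₀)^k h(λ)` with `h` analytic and
`h(λ₀) = det Z ≠ 0`. -/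
theorem det_wronskian_zero_order {N : ℕ} (hN : 1 ≤ N) (lam0 : ℂ)
    (W : ℂ → Matrix (Fin N) (Fin N) ℂ) (W' P : Matrix (Fin N) (Fin N) ℂ)
    (hW : ∀ i j, AnalyticAt ℂ (fun z => W z i j) lam0)
    (hW' : ∀ i j, HasDerivAt (fun z => W z i j) (W' i j) lam0)
    (hPH : Pᴴ = P) (hP2 : P * P = P)
    (hPker : ∀ v : Fin N → ℂ, W lam0 *ᵥ v = 0 ↔ P *ᵥ v = v)
    (hZ : IsUnit (W' * P + W lam0 * (1 - P))) :
    ∃ h : ℂ → ℂ, AnalyticAt ℂ h lam0 ∧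
      h lam0 = (W' * P + W lam0 * (1 - P)).det ∧
      (W' * P + W lam0 * (1 - P)).det ≠ 0 ∧
      ∀ᶠ z in nhds lam0,
        (W z).det =
          (z - lam0) ^ (Module.finrank ℂ (LinearMap.ker (Matrix.mulVecLin (W lam0)))) *
            h z := by
  classical
  -- W(lam0) * P = 0
  have hWP0 : W lam0 * P = 0 := by
    ext i j
    have h1 : P *ᵥ (P *ᵥ Pi.single j 1) = P *ᵥ Pi.single j 1 := by
      rw [Matrix.mulVec_mulVec, hP2]
    have h2 : W lam0 *ᵥ (P *ᵥ Pi.single j 1) = 0 := (hPker _).mpr h1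
    rw [Matrix.mulVec_mulVec] at h2
    have h3 := congrFun h2 i
    simpa [Matrix.mulVec_single] using h3
  set f : Fin N → Fin N → ℂ → ℂ := fun i j z => (W z * P) i j with hfdef
  have hf0 : ∀ i j, f i j lam0 = 0 := by
    intro i j; simp only [hfdef, hWP0, Matrix.zero_apply]
  have hfa : ∀ i j, AnalyticAt ℂ (f i j) lam0 := by
    intro i j
    simp only [hfdef, Matrix.mul_apply]
    exact Finset.analyticAt_fun_sum _ (fun k _ => (hW i k).mul analyticAt_const)
  have hfd : ∀ i j, HasDerivAt (f i j) ((W' * P) i j) lam0 := by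
    intro i j
    simp only [hfdef, Matrix.mul_apply]
    exact HasDerivAt.fun_sum fun k _ => (hW' i k).mul_const _
  set G : ℂ → Matrix (Fin N) (Fin N) ℂ :=
    fun z => Matrix.of fun i j => dslope (f i j) lam0 z with hGdef
  have hGa : ∀ i j, AnalyticAt ℂ (fun z => G z i j) lam0 := by
    intro i j
    obtain ⟨p, hp⟩ := hfa i j
    exact hp.has_fpower_series_dslope_fslope.analyticAt
  have hG0 : G lam0 = W' * P := by
    ext i j
    simp only [hGdef, Matrix.of_apply, dslope_same]
    exact (hfd i j).deriv
  have hGz : ∀ z, z ≠ lam0 → (z - lam0) • G z = W z * P := by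
    intro z hz
    ext i j
    simp only [Matrix.smul_apply, hGdef, Matrix.of_apply, dslope_of_ne _ hz, slope,
      hf0 i j, sub_zero, vsub_eq_sub, smul_eq_mul]
    rw [← mul_assoc, mul_inv_cancel₀ (sub_ne_zero.mpr hz), one_mul]
  have hGP : ∀ z, G z * P = G z := by
    intro z
    rcases eq_or_ne z lam0 with rfl | hz
    · rw [hG0, mul_assoc, hP2]
    · have h1 : (z - lam0) • (G z * P) = (z - lam0) • G z := by
        rw [← Matrix.smul_mul, hGz z hz, mul_assoc, hP2, ← hGz z hz]
      exact smul_right_injective _ (sub_ne_zero.mpr hz) h1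
  set F : ℂ → Matrix (Fin N) (Fin N) ℂ := fun z => G z + W z * (1 - P) with hFdef
  have hF0 : F lam0 = W' * P + W lam0 * (1 - P) := by
    show G lam0 + W lam0 * (1 - P) = _
    rw [hG0]
  have hFa : ∀ i j, AnalyticAt ℂ (fun z => F z i j) lam0 := by
    intro i j
    have h2 : AnalyticAt ℂ (fun z => (W z * (1 - P)) i j) lam0 := by
      simp only [Matrix.mul_apply]
      exact Finset.analyticAt_fun_sum _ (fun k _ => (hW i k).mul analyticAt_const)
    exact (hGa i j).add h2
  -- factorization
  have hfact : ∀ z, W z = F z * ((z - lam0) • P + (1 - P)) := by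
    intro z
    have e1 : F z * P = G z := by
      rw [hFdef]
      have : (1 - P) * P = 0 := by
        rw [Matrix.sub_mul, Matrix.one_mul, hP2, sub_self]
      rw [Matrix.add_mul, hGP z, mul_assoc, this, Matrix.mul_zero, add_zero]
    have e2 : F z * (1 - P) = W z * (1 - P) := by
      rw [hFdef]
      have hG1 : G z * (1 - P) = 0 := by
        rw [Matrix.mul_sub, Matrix.mul_one, hGP z, sub_self]
      have h1P : (1 - P) * (1 - P) = 1 - P := by
        rw [Matrix.sub_mul, Matrix.one_mul, Matrix.mul_sub, Matrix.mul_one, hP2]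
        simp
      rw [Matrix.add_mul, hG1, zero_add, mul_assoc, h1P]
    have expand : F z * ((z - lam0) • P + (1 - P))
        = (z - lam0) • G z + W z * (1 - P) := by
      rw [Matrix.mul_add, Matrix.mul_smul, e1, e2]
    rcases eq_or_ne z lam0 with rfl | hz
    · rw [expand, sub_self, zero_smul, zero_add, Matrix.mul_sub, Matrix.mul_one,
        hWP0, sub_zero]
    · rw [expand, hGz z hz, ← Matrix.mul_add]
      simp
  -- the analytic function h
  refine ⟨fun z => (F z).det, ?_, by show (F lam0).det = _; rw [hF0], ?_, ?_⟩
  · have hdet : (fun z => (F z).det)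
        = fun z => ∑ σ : Equiv.Perm (Fin N),
            ((Equiv.Perm.sign σ : ℤ) : ℂ) * ∏ i, F z (σ i) i := by
      funext z
      simp [Matrix.det_apply, Units.smul_def, zsmul_eq_mul]
    rw [hdet]
    exact Finset.analyticAt_fun_sum _ fun σ _ =>
      analyticAt_const.mul (Finset.analyticAt_fun_prod _ fun i _ => hFa (σ i) i)
  · exact ((Matrix.isUnit_iff_isUnit_det _).mp hZ).ne_zero
  · refine Filter.Eventually.of_forall fun z => ?_
    rw [hfact z, Matrix.det_mul, det_smul_proj_add_aux P hPH hP2,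
      rank_eq_finrank_ker_aux (W lam0) P hP2 hPker, mul_comm]
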